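/- For every digraph D, ndi(D) ≤ 2Δ*(D), i.e., D admits a neighbour-distinguishing proper arc-colouring using at most 2·max{Δ^+(D), Δ^-(D)} colours. -/

import Mathlib

open Finset

section Defs

variable {V : Type*}

/-- A (proper) arc-colouring: arcs sharing a tail, or sharing a head, get distinct colours. -/
def ProperArc (A : V → V → Prop) (γ : V → V → ℕ) : Prop :=
  (∀ u v w, A u v → A u w → v ≠ w → γ u v ≠ γ u w) ∧
  (∀ u v w, A u v → A w v → u ≠ w → γ u v ≠ γ w v)

/-- Colours appearing on outgoing arcs of `u`. -/
def outColors (A : V → V → Prop) (γ : V → V → ℕ) (u : V) : Set ℕ :=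
  {c | ∃ v, A u v ∧ γ u v = c}

/-- Colours appearing on incoming arcs of `u`. -/
def inColors (A : V → V → Prop) (γ : V → V → ℕ) (u : V) : Set ℕ :=
  {c | ∃ v, A v u ∧ γ v u = c}

/-- `u` and `v` are distinguished by `γ`. -/
def Distinguished (A : V → V → Prop) (γ : V → V → ℕ) (u v : V) : Prop :=
  (outColors A γ u, inColors A γ u) ≠ (outColors A γ v, inColors A γ v)

/-- Neighbour-distinguishing arc-colouring. -/
def NDArc (A : V → V → Prop) (γ : V → V → ℕ) : Prop :=
  ∀ u v, A u v → Distinguished A γ u v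

/-- `D` has a neighbour-distinguishing proper arc-colouring with `k` colours. -/
def HasNDColoring (A : V → V → Prop) (k : ℕ) : Prop :=
  ∃ γ : V → V → ℕ, (∀ u v, A u v → γ u v < k) ∧ ProperArc A γ ∧ NDArc A γ

/-- `D` has a proper arc-colouring with `k` colours. -/
def HasProperColoring (A : V → V → Prop) (k : ℕ) : Prop :=
  ∃ γ : V → V → ℕ, (∀ u v, A u v → γ u v < k) ∧ ProperArc A γ

/-- Outdegree of `u`. -/
def outDeg [Fintype V] (A : V → V → Prop) [DecidableRel A] (u : V) : ℕ :=
  (Finset.univ.filter fun v => A u v).card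

/-- Indegree of `u`. -/
def inDeg [Fintype V] (A : V → V → Prop) [DecidableRel A] (u : V) : ℕ :=
  (Finset.univ.filter fun v => A v u).card

/-- Δ*(D) = max{Δ⁺(D), Δ⁻(D)}. -/
def maxDeg [Fintype V] (A : V → V → Prop) [DecidableRel A] : ℕ :=
  max (Finset.univ.sup (outDeg A)) (Finset.univ.sup (inDeg A))

end Defs


section Part1

open scoped Classical

variable {V : Type*} [Fintype V]

lemma exists_margins : ∀ (N : ℕ) (r c : V → ℕ), (∑ u, r u) = N → (∑ v, c v) = N →
    ∃ m : V → V → ℕ, (∀ u, (∑ v, m u v) = r u) ∧ (∀ v, (∑ u, m u v) = c v) := by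
  intro N
  induction N with
  | zero =>
    intro r c hr hc
    refine ⟨fun _ _ => 0, fun u => ?_, fun v => ?_⟩
    · have := Finset.sum_eq_zero_iff.mp hr u (mem_univ u); simp [this]
    · have := Finset.sum_eq_zero_iff.mp hc v (mem_univ v); simp [this]
  | succ N ih =>
    intro r c hr hc
    obtain ⟨u0, -, hu0⟩ := Finset.exists_ne_zero_of_sum_ne_zero (s := univ) (f := r)
      (by omega)
    obtain ⟨v0, -, hv0⟩ := Finset.exists_ne_zero_of_sum_ne_zero (s := univ) (f := c)
      (by omega)
    have hru : (∑ u, Function.update r u0 (r u0 - 1) u) = N := by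
      rw [Finset.sum_update_of_mem (mem_univ u0)]
      have := Finset.add_sum_erase univ r (mem_univ u0)
      have h2 : univ \ {u0} = univ.erase u0 := by
        ext x; simp [Finset.mem_erase, and_comm]
      rw [h2]; omega
    have hcv : (∑ v, Function.update c v0 (c v0 - 1) v) = N := by
      rw [Finset.sum_update_of_mem (mem_univ v0)]
      have := Finset.add_sum_erase univ c (mem_univ v0)
      have h2 : univ \ {v0} = univ.erase v0 := by
        ext x; simp [Finset.mem_erase, and_comm]
      rw [h2]; omega
    obtain ⟨m', hm'r, hm'c⟩ := ih _ _ hru hcv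
    refine ⟨fun u v => m' u v + if u = u0 ∧ v = v0 then 1 else 0, fun u => ?_, fun v => ?_⟩
    · rw [Finset.sum_add_distrib, hm'r u]
      by_cases hu : u = u0
      · have h1 : (∑ v, if u = u0 ∧ v = v0 then 1 else 0) = 1 := by
          simp [hu, Finset.sum_ite_eq' univ v0 (fun _ => 1)]
        rw [h1, hu, Function.update_self]
        omega
      · have h1 : (∑ v, if u = u0 ∧ v = v0 then 1 else 0) = 0 := by
          apply Finset.sum_eq_zero; intro x _; simp [hu]
        rw [h1, Function.update_of_ne hu]; omega
    · rw [Finset.sum_add_distrib, hm'c v]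
      by_cases hv : v = v0
      · have h1 : (∑ u, if u = u0 ∧ v = v0 then 1 else 0) = 1 := by
          simp [hv, Finset.sum_ite_eq' univ u0 (fun _ => 1)]
        rw [h1, hv, Function.update_self]
        omega
      · have h1 : (∑ u, if u = u0 ∧ v = v0 then 1 else 0) = 0 := by
          apply Finset.sum_eq_zero; intro x _; simp [hv]
        rw [h1, Function.update_of_ne hv]; omega


lemma exists_perm {M : V → V → ℕ} {D : ℕ} (hD : 0 < D)
    (hr : ∀ u, (∑ v, M u v) = D) (hc : ∀ v, (∑ u, M u v) = D) :
    ∃ σ : V ≃ V, ∀ u, 0 < M u (σ u) := by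
  classical
  set t : V → Finset V := fun u => univ.filter (fun v => 0 < M u v) with ht
  have hall : ∀ s : Finset V, s.card ≤ (s.biUnion t).card := by
    intro s
    have key : D * s.card ≤ D * (s.biUnion t).card := by
      calc D * s.card = ∑ u ∈ s, D := by rw [Finset.sum_const, smul_eq_mul]; ring
        _ = ∑ u ∈ s, ∑ v, M u v := by exact Finset.sum_congr rfl fun u _ => (hr u).symm
        _ = ∑ u ∈ s, ∑ v ∈ s.biUnion t, M u v := by
            refine Finset.sum_congr rfl fun u hu => ?_
            refine (Finset.sum_subset (Finset.subset_univ _) ?_).symm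
            intro v _ hv
            by_contra h
            exact hv (Finset.mem_biUnion.mpr ⟨u, hu, by simp [ht, Nat.pos_of_ne_zero h]⟩)
        _ = ∑ v ∈ s.biUnion t, ∑ u ∈ s, M u v := Finset.sum_comm
        _ ≤ ∑ v ∈ s.biUnion t, ∑ u, M u v := by
            refine Finset.sum_le_sum fun v _ => ?_
            exact Finset.sum_le_sum_of_subset (Finset.subset_univ s)
        _ = ∑ v ∈ s.biUnion t, D := Finset.sum_congr rfl fun v _ => hc v
        _ = D * (s.biUnion t).card := by rw [Finset.sum_const, smul_eq_mul]; ring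
    exact Nat.le_of_mul_le_mul_left key hD
  obtain ⟨f, hfinj, hf⟩ := (Finset.all_card_le_biUnion_card_iff_exists_injective t).mp hall
  refine ⟨Equiv.ofBijective f ((Finite.injective_iff_bijective).mp hfinj), fun u => ?_⟩
  have := hf u
  simp only [ht, Finset.mem_filter] at this
  exact this.2

lemma decompose : ∀ (D : ℕ) (M : V → V → ℕ), (∀ u, (∑ v, M u v) = D) →
    (∀ v, (∑ u, M u v) = D) →
    ∃ σs : Fin D → (V ≃ V), ∀ u v, M u v = ∑ i, if σs i u = v then 1 else 0 := by
  intro D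
  induction D with
  | zero =>
    intro M hr hc
    refine ⟨Fin.elim0, fun u v => ?_⟩
    have : M u v = 0 := Finset.sum_eq_zero_iff.mp (hr u) v (mem_univ v)
    simp [this]
  | succ D ih =>
    intro M hr hc
    obtain ⟨σ, hσ⟩ := exists_perm (Nat.succ_pos D) hr hc
    set M' : V → V → ℕ := fun u v => M u v - if σ u = v then 1 else 0 with hM'
    have hle : ∀ u v, (if σ u = v then 1 else 0) ≤ M u v := by
      intro u v
      by_cases h : σ u = v
      · simpa [h, Nat.pos_iff_ne_zero, Nat.one_le_iff_ne_zero] using hσ u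
      · simp [h]
    have hsplit : ∀ u v, M u v = M' u v + if σ u = v then 1 else 0 := by
      intro u v
      have := hle u v
      simp only [hM']
      omega
    have hr' : ∀ u, (∑ v, M' u v) = D := by
      intro u
      have h1 : (∑ v, M u v) = (∑ v, M' u v) + ∑ v, if σ u = v then 1 else 0 := by
        rw [← Finset.sum_add_distrib]
        exact Finset.sum_congr rfl fun v _ => hsplit u v
      have h2 : (∑ v, if σ u = v then 1 else 0) = 1 := by
        rw [Finset.sum_ite_eq univ (σ u) (fun _ => 1)]; simp
      have := hr u
      omega
    have hc' : ∀ v, (∑ u, M' u v) = D := by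
      intro v
      have h1 : (∑ u, M u v) = (∑ u, M' u v) + ∑ u, if σ u = v then 1 else 0 := by
        rw [← Finset.sum_add_distrib]
        exact Finset.sum_congr rfl fun u _ => hsplit u v
      have h2 : (∑ u, if σ u = v then 1 else 0) = 1 := by
        have : ∀ u : V, (σ u = v) ↔ (u = σ.symm v) := by
          intro u; constructor
          · intro h; simp [← h]
          · intro h; simp [h]
        rw [Finset.sum_congr rfl fun u _ => by rw [if_congr (this u) rfl rfl]]
        rw [Finset.sum_ite_eq' univ (σ.symm v) (fun _ => 1)]; simp
      have := hc v
      omega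
    obtain ⟨σs', hσs'⟩ := ih M' hr' hc'
    refine ⟨Fin.cons σ σs', fun u v => ?_⟩
    rw [Fin.sum_univ_succ]
    simp only [Fin.cons_zero, Fin.cons_succ]
    rw [← hσs' u v]
    have := hle u v
    have := hsplit u v
    omega


lemma deg_as_sum (A : V → V → Prop) [DecidableRel A] (u : V) :
    outDeg A u = ∑ v, if A u v then 1 else 0 := Finset.card_filter _ _

lemma indeg_as_sum (A : V → V → Prop) [DecidableRel A] (v : V) :
    inDeg A v = ∑ u, if A u v then 1 else 0 := Finset.card_filter _ _

lemma koenig (A : V → V → Prop) [DecidableRel A] :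
    ∃ c : V → V → ℕ, (∀ u v, A u v → c u v < maxDeg A) ∧ ProperArc A c := by
  classical
  set D := maxDeg A with hDdef
  have hout : ∀ u, outDeg A u ≤ D := fun u =>
    le_trans (Finset.le_sup (mem_univ u)) (le_max_left _ _)
  have hin : ∀ v, inDeg A v ≤ D := fun v =>
    le_trans (Finset.le_sup (mem_univ v)) (le_max_right _ _)
  have hsum : (∑ u, outDeg A u) = ∑ v, inDeg A v := by
    simp only [deg_as_sum, indeg_as_sum]
    exact Finset.sum_comm
  have e1 : (∑ u, (D - outDeg A u)) + (∑ u, outDeg A u) = Fintype.card V * D := by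
    rw [← Finset.sum_add_distrib]
    rw [Finset.sum_congr rfl (fun u _ => by have := hout u; omega : ∀ u ∈ univ, (D - outDeg A u) + outDeg A u = D)]
    simp [Finset.sum_const, mul_comm]
  have e2 : (∑ v, (D - inDeg A v)) + (∑ v, inDeg A v) = Fintype.card V * D := by
    rw [← Finset.sum_add_distrib]
    rw [Finset.sum_congr rfl (fun v _ => by have := hin v; omega : ∀ v ∈ univ, (D - inDeg A v) + inDeg A v = D)]
    simp [Finset.sum_const, mul_comm]
  have hN : (∑ v, (D - inDeg A v)) = (∑ u, (D - outDeg A u)) := by omega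
  obtain ⟨corr, hcorrR, hcorrC⟩ := exists_margins (∑ u, (D - outDeg A u))
    (fun u => D - outDeg A u) (fun v => D - inDeg A v) rfl hN
  set M : V → V → ℕ := fun u v => (if A u v then 1 else 0) + corr u v with hM
  have hrow : ∀ u, (∑ v, M u v) = D := by
    intro u
    rw [Finset.sum_add_distrib, ← deg_as_sum, hcorrR u]
    have := hout u; omega
  have hcol : ∀ v, (∑ u, M u v) = D := by
    intro v
    rw [Finset.sum_add_distrib, ← indeg_as_sum, hcorrC v]
    have := hin v; omega
  obtain ⟨σs, hσs⟩ := decompose D M hrow hcol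
  have key : ∀ u v, A u v → ∃ i : Fin D, σs i u = v := by
    intro u v huv
    have h1 : 0 < M u v := by simp [hM, huv]
    rw [hσs u v] at h1
    have h2 : (∑ i, if σs i u = v then 1 else 0) ≠ 0 := by omega
    obtain ⟨i, -, hi⟩ := Finset.exists_ne_zero_of_sum_ne_zero h2
    exact ⟨i, by by_contra hcon; simp [hcon] at hi⟩
  refine ⟨fun u v => if h : A u v then ((key u v h).choose : Fin D) else 0, fun u v huv => ?_, ?_, ?_⟩
  · simp only [dif_pos huv]
    exact (key u v huv).choose.is_lt
  · intro u v w huv huw hne heq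
    simp only [dif_pos huv, dif_pos huw, Nat.cast_inj] at heq
    have h1 := (key u v huv).choose_spec
    have h2 := (key u w huw).choose_spec
    have : (key u v huv).choose = (key u w huw).choose := Fin.ext (by exact_mod_cast heq)
    rw [this, h2] at h1
    exact hne h1.symm
  · intro u v w huv hwv hne heq
    simp only [dif_pos huv, dif_pos hwv] at heq
    have h1 := (key u v huv).choose_spec
    have h2 := (key w v hwv).choose_spec
    have hie : (key u v huv).choose = (key w v hwv).choose := Fin.ext (by exact_mod_cast heq)
    have h3 : (σs (key u v huv).choose) w = v := by rw [hie]; exact h2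
    exact hne ((σs (key u v huv).choose).injective (h1.trans h3.symm))

end Part1

section Part2

open scoped Classical

variable {V : Type*} [Fintype V]


open scoped Classical

variable {V : Type*} [Fintype V]

lemma exists_bits (R : V → V → Prop)
    (hfun : ∀ {u v w}, R u v → R u w → v = w)
    (hinj : ∀ {u v w}, R u w → R v w → u = v)
    (hirr : ∀ u, ¬ R u u) :
    ∃ g : V → Bool, ∀ t u v w, R t u → R u v → R v w →
      ¬(g t = g u ∧ g u = g v) := by
  classical
  set f : V → V := fun u => if h : ∃ v, R u v then h.choose else u with hfdef
  set p : V → V := fun u => if h : ∃ t, R t u then h.choose else u with hpdef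
  have hfR : ∀ {u v}, R u v → f u = v := by
    intro u v h
    have hex : ∃ w, R u w := ⟨v, h⟩
    simp only [hfdef]
    rw [dif_pos hex]
    exact hfun hex.choose_spec h
  have hffix : ∀ {u}, ¬(∃ v, R u v) → f u = u := by
    intro u h; simp only [hfdef]; rw [dif_neg h]
  have hRf : ∀ {u}, (∃ v, R u v) → R u (f u) := by
    intro u h
    have : f u = h.choose := by simp only [hfdef]; rw [dif_pos h]
    rw [this]; exact h.choose_spec
  have hpR : ∀ {t u}, R t u → p u = t := by
    intro t u h
    have hex : ∃ s, R s u := ⟨t, h⟩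
    simp only [hpdef]
    rw [dif_pos hex]
    exact hinj hex.choose_spec h
  have hpfix : ∀ {u}, ¬(∃ t, R t u) → p u = u := by
    intro u h; simp only [hpdef]; rw [dif_neg h]
  have hRp : ∀ {u}, (∃ t, R t u) → R (p u) u := by
    intro u h
    have : p u = h.choose := by simp only [hpdef]; rw [dif_pos h]
    rw [this]; exact h.choose_spec
  -- domain preservation along cyclic orbits
  have horbdom : ∀ u, (∃ v, R u v) → ∀ k m, 0 < m → f^[m] u = u →
      (∃ v, R (f^[k] u) v) := by
    intro u hu k m hm hmu
    by_contra hnd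
    have hfixk : f (f^[k] u) = f^[k] u := hffix hnd
    have hstall : ∀ j, f^[j] (f^[k] u) = f^[k] u := fun j => Function.iterate_fixed hfixk j
    have hmult : f^[m * (k+1)] u = u := by
      rw [Function.iterate_mul]
      exact Function.iterate_fixed hmu (k+1)
    have hge : k ≤ m * (k+1) := by
      have : k + 1 ≤ m * (k + 1) := Nat.le_mul_of_pos_left _ hm
      omega
    have hueq : u = f^[k] u := by
      rw [show m*(k+1) = (m*(k+1) - k) + k by omega, Function.iterate_add_apply,
        hstall] at hmult
      exact hmult.symm
    exact hnd (hueq ▸ hu)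
  set Cyc : V → Prop := fun u => (∃ v, R u v) ∧ ∃ m, 0 < m ∧ f^[m] u = u with hCycdef
  have hcyc_f : ∀ u k, Cyc u → Cyc (f^[k] u) := by
    intro u k hc
    obtain ⟨hud, m, hm, hmu⟩ := hc
    refine ⟨horbdom u hud k m hm hmu, m, hm, ?_⟩
    rw [← Function.iterate_add_apply, Nat.add_comm, Function.iterate_add_apply, hmu]
  have hcyc_pred : ∀ {t u}, R t u → Cyc u → Cyc t ∧ ∃ j, f^[j] u = t := by
    intro t u hR hc
    obtain ⟨hud, m, hm, hmu⟩ := hc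
    have hd : ∃ v, R (f^[m-1] u) v := horbdom u hud (m-1) m hm hmu
    have hfm : f (f^[m-1] u) = u := by
      have h := Function.iterate_succ_apply' f (m-1) u
      rw [show (m - 1).succ = m by omega] at h
      rw [← h]
      exact hmu
    have hRt : R (f^[m-1] u) u := by
      have := hRf hd
      rwa [hfm] at this
    have ht : t = f^[m-1] u := hinj hR hRt
    constructor
    · rw [ht]; exact hcyc_f u (m-1) ⟨hud, m, hm, hmu⟩
    · exact ⟨m-1, ht.symm⟩
  set Orb : V → Finset V := fun u => univ.filter (fun x => ∃ k, f^[k] u = x) with hOrbdef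
  have hOrbMem : ∀ u x, x ∈ Orb u ↔ ∃ k, f^[k] u = x := by
    intro u x; simp [hOrbdef]
  have hOrbSelf : ∀ u, u ∈ Orb u := fun u => (hOrbMem u u).mpr ⟨0, rfl⟩
  have hOrbSub : ∀ u x, x ∈ Orb u → Orb x ⊆ Orb u := by
    intro u x hx y hy
    obtain ⟨k, hk⟩ := (hOrbMem u x).mp hx
    obtain ⟨j, hj⟩ := (hOrbMem x y).mp hy
    exact (hOrbMem u y).mpr ⟨j + k, by rw [Function.iterate_add_apply, hk, hj]⟩
  have hOrbBack : ∀ u, Cyc u → ∀ x, x ∈ Orb u → u ∈ Orb x := by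
    intro u hc x hx
    obtain ⟨k, hk⟩ := (hOrbMem u x).mp hx
    obtain ⟨hud, m, hm, hmu⟩ := hc
    have hge : k ≤ m * (k+1) := by
      have : k + 1 ≤ m * (k + 1) := Nat.le_mul_of_pos_left _ hm
      omega
    refine (hOrbMem x u).mpr ⟨m * (k+1) - k, ?_⟩
    rw [← hk, ← Function.iterate_add_apply, show m*(k+1) - k + k = m*(k+1) by omega,
      Function.iterate_mul]
    exact Function.iterate_fixed hmu (k+1)
  have hOrbEq : ∀ u x, Cyc u → x ∈ Orb u → Orb x = Orb u := by
    intro u x hc hx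
    apply Finset.Subset.antisymm (hOrbSub u x hx)
    exact hOrbSub x u (hOrbBack u hc x hx)
  set φ : V ≃ Fin (Fintype.card V) := Fintype.equivFin V with hφdef
  set base : V → V := fun u => φ.symm (((Orb u).image φ).min'
    (Finset.Nonempty.image ⟨u, hOrbSelf u⟩ φ)) with hbasedef
  have hbase_mem : ∀ u, base u ∈ Orb u := by
    intro u
    have := Finset.min'_mem ((Orb u).image φ) (Finset.Nonempty.image ⟨u, hOrbSelf u⟩ φ)
    obtain ⟨x, hx, hxe⟩ := Finset.mem_image.mp this
    simp only [hbasedef, ← hxe, Equiv.symm_apply_apply]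
    exact hx
  have hbase_congr : ∀ u t, Orb u = Orb t → base u = base t := by
    intro u t h; simp only [hbasedef, h]
  have hdex : ∀ u, Cyc u → ∃ k, f^[k] (base u) = u := by
    intro u hc
    have h1 : base u ∈ Orb u := hbase_mem u
    have h2 := hOrbBack u hc (base u) h1
    exact (hOrbMem (base u) u).mp h2
  have hstab : ∀ u, (∃ v, R u v) → ¬ Cyc u → ∃ k, p^[k+1] u = p^[k] u := by
    intro u hud hnc
    by_contra hno
    push_neg at hno
    have hstep : ∀ k, R (p^[k+1] u) (p^[k] u) := by
      intro k
      have hne := hno k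
      rw [Function.iterate_succ_apply'] at hne ⊢
      by_cases hex : ∃ t, R t (p^[k] u)
      · exact hRp hex
      · exact absurd (hpfix hex) hne
    have hfp : ∀ k, f^[k] (p^[k] u) = u := by
      intro k
      induction k with
      | zero => simp
      | succ k ihk =>
        rw [Function.iterate_succ_apply f]
        rw [hfR (hstep k)]
        exact ihk
    obtain ⟨i, j, hne, heq⟩ := Fintype.exists_ne_map_eq_of_card_lt
      (fun k : Fin (Fintype.card V + 1) => p^[(k : ℕ)] u) (by simp)
    have hab : ∃ a b : ℕ, a < b ∧ p^[a] u = p^[b] u := by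
      rcases lt_or_gt_of_ne hne with h | h
      · exact ⟨i, j, h, heq⟩
      · exact ⟨j, i, h, heq.symm⟩
    obtain ⟨a, b, hab, habe⟩ := hab
    have hcyc : f^[b-a] u = u := by
      have h1 := hfp b
      rw [← habe, show (b:ℕ) = (b - a) + a by omega, Function.iterate_add_apply,
        hfp a] at h1
      exact h1
    exact hnc ⟨hud, b - a, by omega, hcyc⟩
  set g : V → Bool := fun u =>
    if h1 : Cyc u then decide (Nat.find (hdex u h1) % 2 = 1)
    else if h2 : ∃ k, p^[k+1] u = p^[k] u then decide (Nat.find h2 % 2 = 1)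
    else false with hgdef
  have hg_cyc : ∀ u (h1 : Cyc u), g u = decide (Nat.find (hdex u h1) % 2 = 1) := by
    intro u h1; simp only [hgdef]; rw [dif_pos h1]
  have hg_nc : ∀ u (h1 : ¬ Cyc u) (h2 : ∃ k, p^[k+1] u = p^[k] u),
      g u = decide (Nat.find h2 % 2 = 1) := by
    intro u h1 h2; simp only [hgdef]; rw [dif_neg h1, dif_pos h2]
  -- non-cyclic step
  have hnc_step : ∀ {t u}, R t u → (∃ v, R u v) → ¬ Cyc u → g t ≠ g u := by
    intro t u hR hud2 hnc
    have hnct : ¬ Cyc t := by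
      intro hct
      apply hnc
      have := hcyc_f t 1 hct
      rwa [Function.iterate_one, hfR hR] at this
    have h2u := hstab u hud2 hnc
    have h2t := hstab t ⟨u, hR⟩ hnct
    rw [hg_nc t hnct h2t, hg_nc u hnc h2u]
    have hput : p u = t := hpR hR
    have hP : ∀ k, (p^[k+1+1] u = p^[k+1] u) ↔ (p^[k+1] t = p^[k] t) := by
      intro k
      rw [Function.iterate_succ_apply p (k+1) u, Function.iterate_succ_apply p k u, hput]
    have h0 : ¬ (p^[0+1] u = p^[0] u) := by
      simp only [Nat.zero_add, Function.iterate_one, Function.iterate_zero, id_eq, hput]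
      intro h
      exact hirr u (h ▸ hR)
    have hfind_pos : Nat.find h2u ≠ 0 := by
      intro h
      have hs := Nat.find_spec h2u
      rw [h] at hs
      exact h0 hs
    have hle : Nat.find h2u ≤ Nat.find h2t + 1 := Nat.find_le ((hP _).mpr (Nat.find_spec h2t))
    have hge : Nat.find h2t + 1 ≤ Nat.find h2u := by
      have hspec := Nat.find_spec h2u
      have hk : Nat.find h2u = (Nat.find h2u - 1) + 1 := by omega
      rw [hk] at hspec
      have h3 : Nat.find h2t ≤ Nat.find h2u - 1 := Nat.find_le ((hP _).mp hspec)
      omega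
    intro hgeq
    have hiff := decide_eq_decide.mp hgeq
    omega
  -- cyclic step
  have hcyc_step : ∀ {t u}, R t u → Cyc u → g t = g u → u = base u := by
    intro t u hR hcu hg
    by_contra hneq
    obtain ⟨hct, j, hj⟩ := hcyc_pred hR hcu
    have htOrb : t ∈ Orb u := (hOrbMem u t).mpr ⟨j, hj⟩
    have hOtu : Orb t = Orb u := hOrbEq u t hcu htOrb
    have hbase : base t = base u := hbase_congr t u hOtu
    have hden := hdex u hcu
    have hdent := hdex t hct
    have hfdu : f^[Nat.find hden] (base u) = u := Nat.find_spec hden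
    have hdu0 : Nat.find hden ≠ 0 := by
      intro h
      rw [h] at hfdu
      exact hneq (by simpa using hfdu.symm)
    have hcr : Cyc (base u) := by
      obtain ⟨k, hk⟩ := (hOrbMem u (base u)).mp (hbase_mem u)
      rw [← hk]
      exact hcyc_f u k hcu
    obtain ⟨hrd, m, hm, hmr⟩ := hcr
    have hdpre : ∃ v, R (f^[Nat.find hden - 1] (base u)) v :=
      horbdom (base u) hrd (Nat.find hden - 1) m hm hmr
    have hfx : f (f^[Nat.find hden - 1] (base u)) = u := by
      have h := Function.iterate_succ_apply' f (Nat.find hden - 1) (base u)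
      rw [show (Nat.find hden - 1).succ = Nat.find hden by omega] at h
      rw [← h]
      exact hfdu
    have hRx : R (f^[Nat.find hden - 1] (base u)) u := by
      have := hRf hdpre
      rwa [hfx] at this
    have ht_eq : t = f^[Nat.find hden - 1] (base u) := hinj hR hRx
    have hle : Nat.find hdent ≤ Nat.find hden - 1 :=
      Nat.find_le (by rw [hbase]; exact ht_eq.symm)
    have hge : Nat.find hden ≤ Nat.find hdent + 1 := by
      apply Nat.find_le
      have hft : f^[Nat.find hdent] (base t) = t := Nat.find_spec hdent
      rw [Function.iterate_succ_apply', ← hbase, hft]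
      exact hfR hR
    rw [hg_cyc t hct, hg_cyc u hcu] at hg
    have hiff := decide_eq_decide.mp hg
    omega
  refine ⟨g, fun t u v w hR1 hR2 hR3 hcontra => ?_⟩
  obtain ⟨hg1, hg2⟩ := hcontra
  by_cases hcu : Cyc u
  · have hcv : Cyc v := by
      have := hcyc_f u 1 hcu
      rwa [Function.iterate_one, hfR hR2] at this
    have h1 := hcyc_step hR1 hcu hg1
    have h2 := hcyc_step hR2 hcv hg2
    have hvO : v ∈ Orb u := (hOrbMem u v).mpr ⟨1, by rw [Function.iterate_one]; exact hfR hR2⟩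
    have hbe : base v = base u := hbase_congr v u (hOrbEq u v hcu hvO)
    have huv : u = v := by rw [h1, h2, hbe]
    exact hirr u (huv ▸ hR2)
  · exact hnc_step hR1 ⟨v, hR2⟩ hcu hg1


end Part2

/-- For every digraph D, ndi(D) ≤ 2Δ*(D). -/
theorem stmt8 {V : Type*} [Fintype V] (A : V → V → Prop) [DecidableRel A]
    (hirr : Irreflexive A) :
    HasNDColoring A (2 * maxDeg A) := by
  classical
  obtain ⟨c, hcb, hctail, hchead⟩ := koenig A
  have hbits : ∀ i : ℕ, ∃ g : V → Bool, ∀ t u v w,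
      (A t u ∧ c t u = i) → (A u v ∧ c u v = i) → (A v w ∧ c v w = i) →
      ¬(g t = g u ∧ g u = g v) := by
    intro i
    apply exists_bits (fun x y => A x y ∧ c x y = i)
    · intro u v w h1 h2
      by_contra hne
      exact hctail u v w h1.1 h2.1 hne (h1.2.trans h2.2.symm)
    · intro u v w h1 h2
      by_contra hne
      exact hchead u w v h1.1 h2.1 hne (h1.2.trans h2.2.symm)
    · intro u h
      exact hirr u h.1
  choose g hg using hbits
  set γ : V → V → ℕ := fun u v => 2 * c u v + (if g (c u v) u then 1 else 0) with hγdef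
  have hgetc : ∀ u v u' v', γ u v = γ u' v' → c u v = c u' v' := by
    intro u v u' v' h
    simp only [hγdef] at h
    by_cases h1 : g (c u v) u <;> by_cases h2 : g (c u' v') u' <;>
      simp [h1, h2] at h <;> omega
  refine ⟨γ, fun u v huv => ?_, ⟨?_, ?_⟩, ?_⟩
  · have := hcb u v huv
    simp only [hγdef]
    by_cases h1 : g (c u v) u <;> simp [h1] <;> omega
  · intro u v w huv huw hne heq
    exact hctail u v w huv huw hne (hgetc u v u w heq)
  · intro u v w huv hwv hne heq
    exact hchead u v w huv hwv hne (hgetc u v w v heq)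
  · intro u v huv heq
    have houts : outColors A γ u = outColors A γ v := congrArg Prod.fst heq
    have hins : inColors A γ u = inColors A γ v := congrArg Prod.snd heq
    have h1 : γ u v ∈ outColors A γ u := ⟨v, huv, rfl⟩
    rw [houts] at h1
    obtain ⟨w, hvw, hγvw⟩ := h1
    have h2 : γ u v ∈ inColors A γ v := ⟨u, huv, rfl⟩
    rw [← hins] at h2
    obtain ⟨t, htu, hγtu⟩ := h2
    have hcvw : c v w = c u v := hgetc v w u v hγvw
    have hctu : c t u = c u v := hgetc t u u v hγtu
    have hbtu : g (c u v) t = g (c u v) u := by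
      have := hγtu
      simp only [hγdef, hctu] at this
      by_cases b1 : g (c u v) t <;> by_cases b2 : g (c u v) u <;>
        simp [b1, b2] at this ⊢
    have hbvw : g (c u v) u = g (c u v) v := by
      have := hγvw
      simp only [hγdef, hcvw] at this
      by_cases b1 : g (c u v) v <;> by_cases b2 : g (c u v) u <;>
        simp [b1, b2] at this ⊢ 
    exact hg (c u v) t u v w ⟨htu, hctu⟩ ⟨huv, rfl⟩ ⟨hvw, hcvw⟩ ⟨hbtu, hbvw⟩
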